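/- Let g be a finite-dimensional complex semisimple Lie algebra with Cartan matrix A = (a_ij), Chevalley generators e_1, ..., e_n, and suppose indices i_1, ..., i_l and j_1, ..., j_l satisfy: a_{i_r, j} = 0 for all j not in {i_r, j_r}, a_{i_r, j_r} = -1, and the i_r are pairwise distinct and pairwise non-adjacent (a_{i_r, i_s} = 0 for r ≠ s). Then e = e_{i_1} + ... + e_{i_l} satisfies (ad e)^3 = 0 over any field of characteristic 3, i.e. (ad e)^3 takes values in 3·g for the integral form. -/

import Mathlib

open LieAlgebra

/-- Let `g` be a Lie algebra with Cartan matrix `A`, Chevalley generators `E i, F i, H i`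
satisfying the contragredient relations and the Serre relations, over a field of
characteristic 3.  If indices `i_1, ..., i_l` and `j_1, ..., j_l` satisfy
`A (i r) j = 0` for `j ∉ {i r, j r}`, `A (i r) (j r) = -1`, and the `i r` are pairwise
distinct and pairwise non-adjacent, then `e = e_{i_1} + ... + e_{i_l}` satisfies
`(ad e)^3 = 0`. -/
theorem stmt5 {K L : Type*} [Field K] [CharP K 3] [LieRing L] [LieAlgebra K L]
    {n l : ℕ} (A : Fin n → Fin n → ℤ) (E F H : Fin n → L) (i j : Fin l → Fin n)
    (hEF : ∀ a b, ⁅E a, F b⁆ = if a = b then H a else 0)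
    (hHE : ∀ a b, ⁅H a, E b⁆ = ((A a b : ℤ) : K) • E b)
    (hHF : ∀ a b, ⁅H a, F b⁆ = -(((A a b : ℤ) : K) • F b))
    (hHH : ∀ a b, ⁅H a, H b⁆ = 0)
    (hserreE : ∀ a b, a ≠ b → ((ad K L (E a)) ^ (1 - A a b).toNat) (E b) = 0)
    (hserreF : ∀ a b, a ≠ b → ((ad K L (F a)) ^ (1 - A a b).toNat) (F b) = 0)
    (hgen : LieSubalgebra.lieSpan K L (Set.range E ∪ Set.range F ∪ Set.range H) = ⊤)
    (hdiag : ∀ a, A a a = 2)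
    (hoff : ∀ a b, a ≠ b → A a b ≤ 0)
    (hzero : ∀ a b, (A a b = 0) ↔ (A b a = 0))
    (hAij : ∀ r, A (i r) (j r) = -1)
    (hA0 : ∀ r b, b ≠ i r → b ≠ j r → A (i r) b = 0)
    (hinj : Function.Injective i)
    (hnonadj : ∀ r s, r ≠ s → A (i r) (i s) = 0) :
    (ad K L (∑ r, E (i r))) ^ 3 = 0 := by
  classical
  set e : L := ∑ r, E (i r) with he
  set D : Module.End K L := ad K L e with hDdef
  set T : Fin l → Module.End K L := fun r => ad K L (E (i r)) with hTdef
  -- characteristic 3 facts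
  have h3K : ((3 : ℕ) : K) = 0 := by exact_mod_cast CharP.cast_eq_zero K 3
  have h3L : ∀ z : L, (3 : ℕ) • z = 0 := by
    intro z; rw [← Nat.cast_smul_eq_nsmul K, h3K, zero_smul]
  have h3End : ((3 : ℕ) : Module.End K L) = 0 := by
    rw [← map_natCast (algebraMap K (Module.End K L)) 3, h3K, map_zero]
  have hpow3 : ∀ (f : Module.End K L) (x : L), (f ^ 3) x = f (f (f x)) := by
    intro f x
    simp [pow_succ, Module.End.mul_apply]
  -- the E (i r) pairwise commute
  have hEE : ∀ r s, ⁅E (i r), E (i s)⁆ = 0 := by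
    intro r s
    rcases eq_or_ne r s with rfl | hrs
    · exact lie_self _
    · have h := hserreE (i r) (i s) (fun h => hrs (hinj h))
      rw [hnonadj r s hrs] at h
      simpa [ad_apply] using h
  have hcomm : ∀ r s, Commute (T r) (T s) := by
    intro r s
    rw [commute_iff_lie_eq]
    letI : LieRing (Module.End K L) := LieRing.ofAssociativeRing
    have h := LieHom.map_lie (ad K L) (E (i r)) (E (i s))
    rw [hEE r s] at h
    simpa [hTdef] using h.symm
  -- (x + y)^3 = x^3 + y^3 for commuting operators in char 3
  have hadd3 : ∀ x y : Module.End K L, Commute x y → (x + y) ^ 3 = x ^ 3 + y ^ 3 := by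
    intro x y h
    have h3End' : (3 : Module.End K L) = 0 := by
      have : ((3 : ℕ) : Module.End K L) = (3 : Module.End K L) := by norm_cast
      rw [← this, h3End]
    rw [h.add_pow]
    norm_num [Finset.sum_range_succ]
    simp [h3End']
    abel
  have hsum3 : ∀ s : Finset (Fin l), (∑ r ∈ s, T r) ^ 3 = ∑ r ∈ s, (T r) ^ 3 := by
    intro s
    induction s using Finset.cons_induction with
    | empty => simp [pow_succ]
    | cons a s ha ih =>
      rw [Finset.sum_cons, Finset.sum_cons, ← ih]
      exact hadd3 _ _ (Commute.sum_right _ _ _ (fun r _ => hcomm a r))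
  have hDsum : D = ∑ r, T r := by
    rw [hDdef, he]
    exact map_sum (ad K L : L →ₗ[K] Module.End K L) _ _
  have hD3 : D ^ 3 = ∑ r, (T r) ^ 3 := by rw [hDsum, hsum3]
  -- T r kills generators after at most three applications
  have hT2E : ∀ r b, T r (T r (E b)) = 0 := by
    intro r b
    by_cases hb : b = i r
    · have h1 : T r (E b) = 0 := by rw [hb]; simp [hTdef, ad_apply]
      rw [h1, map_zero]
    · by_cases hbj : b = j r
      · have hA : A (i r) b = -1 := by rw [hbj]; exact hAij r
        have h := hserreE (i r) b (fun h => hb h.symm)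
        rw [hA] at h
        have h2 : ((ad K L (E (i r))) ^ 2) (E b) = 0 := by simpa using h
        simpa [hTdef, pow_succ, Module.End.mul_apply] using h2
      · have hA : A (i r) b = 0 := hA0 r b hb hbj
        have h := hserreE (i r) b (fun h => hb h.symm)
        rw [hA] at h
        have h1 : T r (E b) = 0 := by simpa [hTdef] using h
        rw [h1, map_zero]
  have hE3 : ∀ r b, ((T r) ^ 3) (E b) = 0 := by
    intro r b; rw [hpow3, hT2E, map_zero]
  have hF3 : ∀ r b, ((T r) ^ 3) (F b) = 0 := by
    intro r b
    rw [hpow3]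
    have h1 : T r (F b) = if i r = b then H (i r) else 0 := by
      simpa [hTdef, ad_apply] using hEF (i r) b
    by_cases h : i r = b
    · rw [h1, if_pos h]
      have h2 : T r (H (i r)) = -(((A (i r) (i r) : ℤ) : K) • E (i r)) := by
        show ⁅E (i r), H (i r)⁆ = _
        rw [← lie_skew, hHE]
      rw [h2]
      simp [hTdef, ad_apply]
    · rw [h1, if_neg h, map_zero, map_zero]
  have hH3 : ∀ r b, ((T r) ^ 3) (H b) = 0 := by
    intro r b
    rw [hpow3]
    have h1 : T r (H b) = -(((A b (i r) : ℤ) : K) • E (i r)) := by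
      show ⁅E (i r), H b⁆ = _
      rw [← lie_skew, hHE]
    rw [h1]
    simp [hTdef, ad_apply]
  have hE0 : ∀ b, (D ^ 3) (E b) = 0 := by
    intro b; rw [hD3, LinearMap.sum_apply]
    exact Finset.sum_eq_zero fun r _ => hE3 r b
  have hF0 : ∀ b, (D ^ 3) (F b) = 0 := by
    intro b; rw [hD3, LinearMap.sum_apply]
    exact Finset.sum_eq_zero fun r _ => hF3 r b
  have hH0 : ∀ b, (D ^ 3) (H b) = 0 := by
    intro b; rw [hD3, LinearMap.sum_apply]
    exact Finset.sum_eq_zero fun r _ => hH3 r b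
  -- D^3 is a derivation in characteristic 3
  have hDlie : ∀ x y : L, D ⁅x, y⁆ = ⁅D x, y⁆ + ⁅x, D y⁆ := by
    intro x y
    simp only [hDdef, ad_apply]
    exact leibniz_lie e x y
  have key3 : ∀ z : L, z + z + z = 0 := by
    intro z
    have h := h3L z
    rw [succ_nsmul, succ_nsmul, one_nsmul] at h
    exact h
  have hder : ∀ x y : L, (D ^ 3) ⁅x, y⁆ = ⁅(D ^ 3) x, y⁆ + ⁅x, (D ^ 3) y⁆ := by
    intro x y
    rw [hpow3, hpow3, hpow3]
    simp only [hDlie, map_add]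
    have hq := key3 ⁅D (D x), D y⁆
    have hu := key3 ⁅D x, D (D y)⁆
    have expand : ∀ p q u v : L, q + q + q = 0 → u + u + u = 0 →
        p + q + (q + u) + (q + u + (u + v)) = p + v := by
      intro p q u v hq' hu'
      have h' : p + q + (q + u) + (q + u + (u + v)) = p + v + (q + q + q) + (u + u + u) := by
        abel
      rw [h', hq', hu', add_zero, add_zero]
    exact expand _ _ _ _ hq hu
  -- kernel of D^3 is a Lie subalgebra containing the generators
  let S : LieSubalgebra K L :=
    { carrier := {x | (D ^ 3) x = 0}
      add_mem' := by intro a b ha hb; simp only [Set.mem_setOf_eq] at *; rw [map_add, ha, hb, add_zero]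
      zero_mem' := by simp only [Set.mem_setOf_eq]; exact map_zero _
      smul_mem' := by intro c x hx; simp only [Set.mem_setOf_eq] at *; rw [map_smul, hx, smul_zero]
      lie_mem' := by
        intro x y hx hy; simp only [Set.mem_setOf_eq] at *
        rw [hder, hx, hy, zero_lie, lie_zero, add_zero] }
  have hsub : LieSubalgebra.lieSpan K L (Set.range E ∪ Set.range F ∪ Set.range H) ≤ S := by
    rw [LieSubalgebra.lieSpan_le]
    rintro x ((⟨a, rfl⟩ | ⟨a, rfl⟩) | ⟨a, rfl⟩)
    · exact hE0 a
    · exact hF0 a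
    · exact hH0 a
  have hall : ∀ x : L, (D ^ 3) x = 0 := by
    intro x
    have : x ∈ S := by
      rw [hgen] at hsub
      exact hsub (LieSubalgebra.mem_top x)
    exact this
  exact LinearMap.ext hall
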